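/- arXiv:2205.11552 — 2 statements merged into one kernel-verified Lean document; each statement's English description precedes it below -/
import Mathlib

section
/- Let H be the heart of a bounded t-structure on a triangulated category T, and suppose x ∈ T satisfies x ∈ [[a,b]]_H with a < b, and Hom_T(x, x[i]) = 0 for all i < 0. Then Hom_T(H^b_H(x), H^a_H(x)) = 0. -/
open CategoryTheory Limits Pretriangulated Triangulated

namespace TSt

variable {C : Type*} [Category C] [Preadditive C] [HasZeroObject C] [HasShift C ℤ]
  [∀ (n : ℤ), (shiftFunctor C n).Additive] [Pretriangulated C]

/-- The truncation `τ_{≤ n} A` with respect to a t-structure, defined (up to isomorphism)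
by the triangle `τ_{≤n} A → A → τ_{≥ n+1} A → `. -/
noncomputable def truncLEObj (t : TStructure C) (n : ℤ) (A : C) : C :=
  (t.exists_triangle A n (n + 1) rfl).choose

/-- The truncation `τ_{≥ n} A` with respect to a t-structure. -/
noncomputable def truncGEObj (t : TStructure C) (n : ℤ) (A : C) : C :=
  (t.exists_triangle A (n - 1) n (by omega)).choose_spec.choose

/-- The `n`-th cohomology object of `A` with respect to the t-structure `t`:
`H^n(A) = (τ_{≥ n} τ_{≤ n} A)⟦n⟧`, an object of the heart. -/
noncomputable def cohObj (t : TStructure C) (n : ℤ) (A : C) : C :=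
  (truncGEObj t n (truncLEObj t n A))⟦n⟧

/-- Membership in the heart of a t-structure. -/
def InHeart (t : TStructure C) (A : C) : Prop := t.le 0 A ∧ t.ge 0 A

/-- A t-structure is bounded if every object is bounded above and below for it. -/
def IsBoundedTStructure (t : TStructure C) : Prop :=
  ∀ X : C, ∃ a b : ℤ, t.ge a X ∧ t.le b X

/-- `x ∈ [a,b]_t` : the cohomology of `x` with respect to `t` vanishes outside `[a,b]`. -/
def MemIcc (t : TStructure C) (a b : ℤ) (x : C) : Prop :=
  ∀ i : ℤ, (i < a ∨ b < i) → IsZero (cohObj t i x)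

/-- `x ∈ [[a,b]]_t` : cohomology concentrated in `[a,b]`, nonzero at both endpoints. -/
def MemIccStrict (t : TStructure C) (a b : ℤ) (x : C) : Prop :=
  MemIcc t a b x ∧ ¬ IsZero (cohObj t a x) ∧ ¬ IsZero (cohObj t b x)


lemma zero_of_LE_GE (t : TStructure C) {X Y : C} {n m : ℤ} (hX : t.le n X) (hY : t.ge m Y)
    (h : n < m) (f : X ⟶ Y) : f = 0 := by
  have h1 : t.le 0 (X⟦n⟧) := t.le_shift n n 0 (by omega) X hX
  have h2 : t.ge (m - n) (Y⟦n⟧) := t.ge_shift m n (m - n) (by omega) Y hY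
  have h3 : t.ge 1 (Y⟦n⟧) := t.ge_antitone (by omega) _ h2
  have hz : (shiftFunctor C n).map f = 0 := t.zero' _ h1 h3
  exact (shiftFunctor C n).map_injective (by rw [hz, Functor.map_zero])

lemma isZero_of_LE_GE (t : TStructure C) {X : C} {n m : ℤ} (hX : t.le n X) (hX' : t.ge m X)
    (h : n < m) : IsZero X := by
  rw [IsZero.iff_id_eq_zero]
  exact zero_of_LE_GE t hX hX' h _

lemma isZero_of_isZero_shift {X : C} {n : ℤ} (h : IsZero (X⟦n⟧)) : IsZero X := by
  rw [IsZero.iff_id_eq_zero] at h ⊢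
  apply (shiftFunctor C n).map_injective
  rw [CategoryTheory.Functor.map_id, Functor.map_zero, h]

lemma LE_of_orthogonal (t : TStructure C) {X : C} {n : ℤ}
    (h : ∀ (Y : C), t.ge (n + 1) Y → ∀ f : X ⟶ Y, f = 0) : t.le n X := by
  obtain ⟨L, Y, hL, hY, f, g, hc, mem⟩ := t.exists_triangle X n (n + 1) rfl
  have hg : g = 0 := h Y hY g
  have hYzero : IsZero Y := by
    rw [IsZero.iff_id_eq_zero]
    obtain ⟨φ, hφ⟩ := Triangle.yoneda_exact₃ _ mem (𝟙 Y) (by rw [Triangle.mk_mor₂, hg]; exact zero_comp)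
    rw [hφ, zero_of_LE_GE t (t.le_shift n 1 (n - 1) (by omega) L hL) hY (by omega) φ]; exact comp_zero
  have hf : IsIso f := ((Triangle.mk f g hc).isZero₃_iff_isIso₁ mem).1 hYzero
  exact ObjectProperty.prop_of_iso (t.le n) (asIso f) hL

lemma GE_of_orthogonal (t : TStructure C) {Y : C} {n : ℤ}
    (h : ∀ (X : C), t.le n X → ∀ f : X ⟶ Y, f = 0) : t.ge (n + 1) Y := by
  obtain ⟨L, G, hL, hG, f, g, hc, mem⟩ := t.exists_triangle Y n (n + 1) rfl
  have hf : f = 0 := h L hL f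
  have hLzero : IsZero L := by
    rw [IsZero.iff_id_eq_zero]
    obtain ⟨φ, hφ⟩ := Triangle.coyoneda_exact₂ _ (inv_rot_of_distTriang _ mem) (𝟙 L)
      (by dsimp [Triangle.invRotate]; rw [hf]; exact comp_zero)
    rw [hφ, zero_of_LE_GE t hL (t.ge_shift (n + 1) (-1) (n + 2) (by omega) G hG) (by omega) φ]
    exact zero_comp
  have hg : IsIso g := ((Triangle.mk f g hc).isZero₁_iff_isIso₂ mem).1 hLzero
  exact ObjectProperty.prop_of_iso (t.ge (n + 1)) (asIso g).symm hG

lemma LE_ext (t : TStructure C) {T : Triangle C} (hT : T ∈ distTriang C) {n : ℤ}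
    (h1 : t.le n T.obj₁) (h3 : t.le n T.obj₃) : t.le n T.obj₂ := by
  apply LE_of_orthogonal t
  intro Y hY f
  obtain ⟨g, hg⟩ := Triangle.yoneda_exact₂ _ hT f (zero_of_LE_GE t h1 hY (by omega) _)
  rw [hg, zero_of_LE_GE t h3 hY (by omega) g, comp_zero]

lemma GE_ext (t : TStructure C) {T : Triangle C} (hT : T ∈ distTriang C) {n : ℤ}
    (h1 : t.ge n T.obj₁) (h3 : t.ge n T.obj₃) : t.ge n T.obj₂ := by
  obtain ⟨m, rfl⟩ : ∃ m, n = m + 1 := ⟨n - 1, by omega⟩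
  apply GE_of_orthogonal t
  intro X hX f
  obtain ⟨g, hg⟩ := Triangle.coyoneda_exact₂ _ hT f (zero_of_LE_GE t hX h3 (by omega) _)
  rw [hg, zero_of_LE_GE t hX h1 (by omega) g, zero_comp]

lemma truncLE_spec (t : TStructure C) (n : ℤ) (A : C) :
    t.le n (truncLEObj t n A) ∧ ∃ (Y : C) (_ : t.ge (n + 1) Y) (f : truncLEObj t n A ⟶ A)
      (g : A ⟶ Y) (h : Y ⟶ (truncLEObj t n A)⟦(1 : ℤ)⟧),
      Triangle.mk f g h ∈ distTriang C := by
  obtain ⟨Y, hX, hY, f, g, h, mem⟩ := (t.exists_triangle A n (n + 1) rfl).choose_spec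
  exact ⟨hX, Y, hY, f, g, h, mem⟩

lemma truncGE_spec (t : TStructure C) (n : ℤ) (A : C) :
    t.ge n (truncGEObj t n A) ∧ ∃ (X : C) (_ : t.le (n - 1) X) (f : X ⟶ A)
      (g : A ⟶ truncGEObj t n A) (h : truncGEObj t n A ⟶ X⟦(1 : ℤ)⟧),
      Triangle.mk f g h ∈ distTriang C := by
  obtain ⟨hX, hY, f, g, h, mem⟩ :=
    (t.exists_triangle A (n - 1) n (by omega)).choose_spec.choose_spec
  exact ⟨hY, _, hX, f, g, h, mem⟩


lemma LE_pred (t : TStructure C) {x : C} {n : ℤ} (hx : t.le n x)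
    (h0 : IsZero (cohObj t n x)) : t.le (n - 1) x := by
  obtain ⟨hL, Y, hY, f, g, h, mem⟩ := truncLE_spec t n x
  have hYle : t.le n Y := LE_ext t (rot_of_distTriang _ mem) hx
    (t.le_monotone (show n - 1 ≤ n by omega) _ (t.le_shift n 1 (n - 1) (by omega) _ hL))
  have hYzero : IsZero Y := isZero_of_LE_GE t hYle hY (by omega)
  have hf : IsIso f := ((Triangle.mk f g h).isZero₃_iff_isIso₁ mem).1 hYzero
  obtain ⟨hG, M, hM, p, q, r, mem2⟩ := truncGE_spec t n (truncLEObj t n x)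
  have hGzero : IsZero (truncGEObj t n (truncLEObj t n x)) := isZero_of_isZero_shift h0
  have hp : IsIso p := ((Triangle.mk p q r).isZero₃_iff_isIso₁ mem2).1 hGzero
  exact ObjectProperty.prop_of_iso (t.le (n - 1)) (asIso p ≪≫ asIso f) hM

lemma GE_succ (t : TStructure C) {x : C} {n : ℤ} (hx : t.ge n x)
    (h0 : IsZero (cohObj t n x)) : t.ge (n + 1) x := by
  obtain ⟨hL, Y, hY, f, g, h, mem⟩ := truncLE_spec t n x
  have hLge : t.ge n (truncLEObj t n x) := GE_ext t (inv_rot_of_distTriang _ mem)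
    (t.ge_antitone (show n ≤ n + 2 by omega) _ (t.ge_shift (n + 1) (-1) (n + 2) (by omega) _ hY))
    hx
  obtain ⟨hG, M, hM, p, q, r, mem2⟩ := truncGE_spec t n (truncLEObj t n x)
  have hMge : t.ge n M := GE_ext t (inv_rot_of_distTriang _ mem2)
    (t.ge_antitone (show n ≤ n + 1 by omega) _ (t.ge_shift n (-1) (n + 1) (by omega) _ hG)) hLge
  have hMzero : IsZero M := isZero_of_LE_GE t hM hMge (by omega)
  have hq : IsIso q := ((Triangle.mk p q r).isZero₁_iff_isIso₂ mem2).1 hMzero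
  have hGzero : IsZero (truncGEObj t n (truncLEObj t n x)) := isZero_of_isZero_shift h0
  have hLzero : IsZero (truncLEObj t n x) := hGzero.of_iso (asIso q)
  have hg : IsIso g := ((Triangle.mk f g h).isZero₁_iff_isIso₂ mem).1 hLzero
  exact ObjectProperty.prop_of_iso (t.ge (n + 1)) (asIso g).symm hY

lemma LE_of_bounded (t : TStructure C) {x : C} {b B : ℤ} (hB : t.le B x)
    (h : ∀ i, b < i → IsZero (cohObj t i x)) : t.le b x := by
  have key : ∀ k : ℕ, t.le (b + k) x → t.le b x := by
    intro k
    induction k with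
    | zero => intro hk; simpa using hk
    | succ k ih =>
      intro hk
      have h' := LE_pred t hk (h (b + (k + 1 : ℕ)) (by push_cast; omega))
      have e : b + ((k + 1 : ℕ) : ℤ) - 1 = b + (k : ℤ) := by push_cast; ring
      rw [e] at h'
      exact ih h'
  exact key (B - b).toNat (t.le_monotone (by omega) _ hB)

lemma GE_of_bounded (t : TStructure C) {x : C} {a A : ℤ} (hA : t.ge A x)
    (h : ∀ i, i < a → IsZero (cohObj t i x)) : t.ge a x := by
  have key : ∀ k : ℕ, t.ge (a - k) x → t.ge a x := by
    intro k
    induction k with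
    | zero => intro hk; simpa using hk
    | succ k ih =>
      intro hk
      have h' := GE_succ t hk (h (a - (k + 1 : ℕ)) (by push_cast; omega))
      have e : a - ((k + 1 : ℕ) : ℤ) + 1 = a - (k : ℤ) := by push_cast; ring
      rw [e] at h'
      exact ih h'
  exact key (a - A).toNat (t.ge_antitone (by omega) _ hA)


/-- If `x ∈ [[a,b]]_H` with `a < b` and `x` has no negative
self-extensions, then `Hom(H^b(x), H^a(x)) = 0`. -/
theorem hom_top_to_bottom_cohomology_eq_zero
    (t : TStructure C) (ht : IsBoundedTStructure t) (x : C) (a b : ℤ) (hab : a < b)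
    (hx : MemIccStrict t a b x)
    (hneg : ∀ i : ℤ, i < 0 → ∀ f : x ⟶ x⟦i⟧, f = 0) :
    ∀ f : cohObj t b x ⟶ cohObj t a x, f = 0 := by
  intro f
  obtain ⟨hIcc, -, -⟩ := hx
  obtain ⟨A, B, hA, hB⟩ := ht x
  have hxb : t.le b x := LE_of_bounded t hB (fun i hi => hIcc i (Or.inr hi))
  have hxa : t.ge a x := GE_of_bounded t hA (fun i hi => hIcc i (Or.inl hi))
  obtain ⟨hLb, Yb, hYb, u, v, w, memb⟩ := truncLE_spec t b x
  obtain ⟨hGb, Mb, hMb, p, q, r, memb2⟩ := truncGE_spec t b (truncLEObj t b x)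
  obtain ⟨hLa, Ya, hYa, s, e, m, mema⟩ := truncLE_spec t a x
  obtain ⟨hGa, Na, hNa, p', σ, r', mema2⟩ := truncGE_spec t a (truncLEObj t a x)
  -- u : truncLEObj t b x ⟶ x is an iso
  have hYble : t.le b Yb := LE_ext t (rot_of_distTriang _ memb) hxb
    (t.le_monotone (show b - 1 ≤ b by omega) _ (t.le_shift b 1 (b - 1) (by omega) _ hLb))
  have hYbzero : IsZero Yb := isZero_of_LE_GE t hYble hYb (by omega)
  haveI hu : IsIso u := ((Triangle.mk u v w).isZero₃_iff_isIso₁ memb).1 hYbzero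
  -- Gb ∈ LE b
  have hGble : t.le b (truncGEObj t b (truncLEObj t b x)) :=
    LE_ext t (rot_of_distTriang _ memb2) hLb
      (t.le_monotone (show b - 2 ≤ b by omega) _ (t.le_shift (b - 1) 1 (b - 2) (by omega) _ hMb))
  -- La ∈ GE a
  have hLage : t.ge a (truncLEObj t a x) := GE_ext t (inv_rot_of_distTriang _ mema)
    (t.ge_antitone (show a ≤ a + 2 by omega) _ (t.ge_shift (a + 1) (-1) (a + 2) (by omega) _ hYa))
    hxa
  have hNage : t.ge a Na := GE_ext t (inv_rot_of_distTriang _ mema2)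
    (t.ge_antitone (show a ≤ a + 1 by omega) _ (t.ge_shift a (-1) (a + 1) (by omega) _ hGa)) hLage
  have hNazero : IsZero Na := isZero_of_LE_GE t hNa hNage (by omega)
  haveI hσ : IsIso σ := ((Triangle.mk p' σ r').isZero₁_iff_isIso₂ mema2).1 hNazero
  -- reduce f to g
  let f₁ : (truncGEObj t b (truncLEObj t b x))⟦b⟧ ⟶ (truncLEObj t a x)⟦a⟧ :=
    f ≫ (shiftFunctor C a).map (inv σ)
  let g : truncGEObj t b (truncLEObj t b x) ⟶ ((truncLEObj t a x)⟦a⟧)⟦-b⟧ :=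
    (shiftEquiv C b).unitIso.hom.app (truncGEObj t b (truncLEObj t b x)) ≫
      (shiftFunctor C (-b)).map f₁
  suffices hg : g = 0 by
    have h1 : (shiftFunctor C (-b)).map f₁ = 0 := by
      apply (cancel_epi
        ((shiftEquiv C b).unitIso.hom.app (truncGEObj t b (truncLEObj t b x)))).1
      exact hg.trans comp_zero.symm
    have h2 : f₁ = 0 := (shiftFunctor C (-b)).map_injective (by rw [h1, Functor.map_zero])
    have h3 : f = f₁ ≫ (shiftFunctor C a).map σ := by
      have hinv : (shiftFunctor C a).map (inv σ) ≫ (shiftFunctor C a).map σ = 𝟙 _ := by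
        rw [← Functor.map_comp, IsIso.inv_hom_id, CategoryTheory.Functor.map_id]
      have h4 : f = f ≫ (shiftFunctor C a).map (inv σ) ≫ (shiftFunctor C a).map σ := by
        exact (Category.comp_id f).symm.trans (congrArg (fun φ => f ≫ φ) hinv.symm)
      exact h4.trans (Category.assoc _ _ _).symm
    rw [h3, h2]
    exact zero_comp
  -- now prove g = 0
  have hsc : g ≫ (shiftFunctor C (-b)).map ((shiftFunctor C a).map s) = 0 := by
    have hq : q ≫ (g ≫ (shiftFunctor C (-b)).map ((shiftFunctor C a).map s)) = 0 := by
      have hχ : inv u ≫ q ≫ g ≫ (shiftFunctor C (-b)).map ((shiftFunctor C a).map s) = 0 := by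
        set E := (shiftFunctorAdd' C a (-b) (a - b) (by omega)).app x with hE
        set χ := inv u ≫ q ≫ g ≫ (shiftFunctor C (-b)).map ((shiftFunctor C a).map s) with hχd
        have h0 : χ ≫ E.inv = 0 := hneg (a - b) (by omega) (χ ≫ E.inv)
        have : χ = (χ ≫ E.inv) ≫ E.hom := by simp
        rw [this, h0, zero_comp]
      have := congrArg (fun φ => u ≫ φ) hχ
      simpa using this
    obtain ⟨φ, hφ⟩ := Triangle.yoneda_exact₃ _ memb2
      (g ≫ (shiftFunctor C (-b)).map ((shiftFunctor C a).map s)) hq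
    have hφ0 : φ = 0 := zero_of_LE_GE t (t.le_shift (b - 1) 1 (b - 2) (by omega) _ hMb)
      (t.ge_shift 0 (-b) b (by omega) _ (t.ge_shift a a 0 (by omega) x hxa)) (by omega) φ
    rw [hφ0] at hφ
    exact hφ.trans comp_zero
  have hT' : (Triangle.shiftFunctor C (-b)).obj
      ((Triangle.shiftFunctor C a).obj (Triangle.mk s e m)) ∈ distTriang C :=
    Triangle.shift_distinguished _ (Triangle.shift_distinguished _ mema a) (-b)
  have hmor : g ≫ ((Triangle.shiftFunctor C (-b)).obj
      ((Triangle.shiftFunctor C a).obj (Triangle.mk s e m))).mor₁ = 0 := by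
    dsimp [Triangle.shiftFunctor]
    change g ≫ (((-b).negOnePow : ℤ) • (shiftFunctor C (-b)).map
      (((a.negOnePow : ℤ)) • (shiftFunctor C a).map s)) = 0
    simp only [Triangle.mk_mor₁, Units.smul_def, Functor.map_zsmul, Preadditive.comp_zsmul, hsc, smul_zero]
  obtain ⟨h', hh'⟩ := Triangle.coyoneda_exact₂ _ (inv_rot_of_distTriang _ hT') g hmor
  have hh0 : h' = 0 := zero_of_LE_GE t hGble
    (t.ge_shift (1 + b) (-1) (2 + b) (by omega) _
      (t.ge_shift 1 (-b) (1 + b) (by omega) _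
        (t.ge_shift (a + 1) a 1 (by omega) _ hYa))) (by omega) h'
  rw [hh', hh0]
  exact zero_comp

end TSt
end

section
/- Let A and H be hearts of two bounded t-structures on a triangulated category T, and let a ≤ b be integers. Write H ∈ [a,b]_A to mean every object of H has A-cohomology concentrated in degrees [a,b]. Then H ∈ [a,b]_A if and only if A ∈ [-b,-a]_H. -/
open CategoryTheory Limits Pretriangulated Triangulated

namespace TSt

variable {C : Type*} [Category C] [Preadditive C] [HasZeroObject C] [HasShift C ℤ]
  [∀ (n : ℤ), (shiftFunctor C n).Additive] [Pretriangulated C]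

/-! ### Auxiliary lemmas -/

lemma zero_of_le_ge (t : TStructure C) {X Y : C} {p q : ℤ} (hX : t.le p X) (hY : t.ge q Y)
    (h : p < q) (f : X ⟶ Y) : f = 0 := by
  have h1 : t.le 0 (X⟦p⟧) := t.le_shift p p 0 (by omega) X hX
  have h2 : t.ge (q - p) (Y⟦p⟧) := t.ge_shift q p (q - p) (by omega) Y hY
  have h3 : t.ge 1 (Y⟦p⟧) := t.ge_antitone (by omega) _ h2
  have h4 : (shiftFunctor C p).map f = 0 := t.zero' _ h1 h3
  exact (shiftFunctor C p).map_injective (by rw [h4, Functor.map_zero])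

lemma isZero_of_shift {X : C} (n : ℤ) (h : IsZero (X⟦n⟧)) : IsZero X := by
  rw [IsZero.iff_id_eq_zero] at h ⊢
  apply (shiftFunctor C n).map_injective
  rw [CategoryTheory.Functor.map_id, CategoryTheory.Functor.map_zero, h]

lemma isZero_shift {X : C} (h : IsZero X) (n : ℤ) : IsZero (X⟦n⟧) := by
  rw [IsZero.iff_id_eq_zero] at h ⊢
  rw [← CategoryTheory.Functor.map_id, h, CategoryTheory.Functor.map_zero]

lemma truncLE_prop (t : TStructure C) (n : ℤ) (A : C) :
    ∃ (Y : C) (_ : t.le n (truncLEObj t n A)) (_ : t.ge (n + 1) Y)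
      (f : truncLEObj t n A ⟶ A) (g : A ⟶ Y) (h : Y ⟶ (truncLEObj t n A)⟦(1 : ℤ)⟧),
      Triangle.mk f g h ∈ distTriang C :=
  (t.exists_triangle A n (n + 1) rfl).choose_spec

lemma truncGE_prop (t : TStructure C) (n : ℤ) (A : C) :
    ∃ (X : C) (_ : t.le (n - 1) X) (_ : t.ge n (truncGEObj t n A))
      (f : X ⟶ A) (g : A ⟶ truncGEObj t n A) (h : truncGEObj t n A ⟶ X⟦(1 : ℤ)⟧),
      Triangle.mk f g h ∈ distTriang C :=
  ⟨_, (t.exists_triangle A (n - 1) n (by omega)).choose_spec.choose_spec⟩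

/-- If the first map of a distinguished triangle vanishes and the relevant `Hom` group
vanishes, then the first object is zero. -/
lemma isZero₁' (t : TStructure C) {T : Triangle C} (hT : T ∈ distTriang C) {p q : ℤ}
    (h1 : t.le p T.obj₁) (h3 : t.ge q T.obj₃) (hpq : p ≤ q) (h : T.mor₁ = 0) :
    IsZero T.obj₁ := by
  rw [IsZero.iff_id_eq_zero]
  obtain ⟨e, he⟩ := Triangle.coyoneda_exact₂ _ (inv_rot_of_distTriang _ hT) (𝟙 T.obj₁)
    (by change 𝟙 T.obj₁ ≫ T.mor₁ = 0; rw [Category.id_comp, h])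
  have he0 : e = 0 := zero_of_le_ge t h1 (t.ge_shift q (-1) (q + 1) (by omega) _ h3) (by omega) e
  rw [he, he0]; exact zero_comp

/-- If the second map of a distinguished triangle vanishes and the relevant `Hom` group
vanishes, then the third object is zero. -/
lemma isZero₃' (t : TStructure C) {T : Triangle C} (hT : T ∈ distTriang C) {p q : ℤ}
    (h1 : t.le p T.obj₁) (h3 : t.ge q T.obj₃) (hpq : p - 1 < q) (h : T.mor₂ = 0) :
    IsZero T.obj₃ := by
  rw [IsZero.iff_id_eq_zero]
  obtain ⟨e, he⟩ := Triangle.yoneda_exact₃ _ hT (𝟙 T.obj₃) (by rw [h, zero_comp])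
  have he0 : e = 0 := zero_of_le_ge t (t.le_shift p 1 (p - 1) (by omega) _ h1) h3 (by omega) e
  rw [he, he0, comp_zero]

lemma ge_of_orth (t : TStructure C) {Y : C} {n : ℤ}
    (H : ∀ W, t.le (n - 1) W → ∀ f : W ⟶ Y, f = 0) : t.ge n Y := by
  obtain ⟨G, hL, hG, f, g, h, hT⟩ := truncLE_prop t (n - 1) Y
  rw [show n - 1 + 1 = n by omega] at hG
  have hf : f = 0 := H _ hL f
  have hz : IsZero (truncLEObj t (n - 1) Y) := isZero₁' t hT hL hG (by omega) hf
  have : IsIso g := (Triangle.isZero₁_iff_isIso₂ _ hT).1 hz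
  exact ObjectProperty.prop_of_iso (t.ge n) (asIso g).symm hG

lemma le_of_orth (t : TStructure C) {Y : C} {n : ℤ}
    (H : ∀ W, t.ge (n + 1) W → ∀ f : Y ⟶ W, f = 0) : t.le n Y := by
  obtain ⟨G, hL, hG, f, g, h, hT⟩ := truncLE_prop t n Y
  have hg : g = 0 := H _ hG g
  have hz : IsZero G := isZero₃' t hT hL hG (by omega) hg
  have : IsIso f := (Triangle.isZero₃_iff_isIso₁ _ hT).1 hz
  exact ObjectProperty.prop_of_iso (t.le n) (asIso f) hL

lemma ge_obj₁ (t : TStructure C) {T : Triangle C} (hT : T ∈ distTriang C) {n c : ℤ}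
    (h₂ : t.ge n T.obj₂) (h₃ : t.ge c T.obj₃) (hc : n ≤ c + 1) : t.ge n T.obj₁ := by
  apply ge_of_orth
  intro V hV φ
  obtain ⟨e, he⟩ := Triangle.coyoneda_exact₂ _ (inv_rot_of_distTriang _ hT) φ
    (by change φ ≫ T.mor₁ = 0; exact zero_of_le_ge t hV h₂ (by omega) _)
  have he0 : e = 0 := zero_of_le_ge t hV (t.ge_shift c (-1) (c + 1) (by omega) _ h₃) (by omega) e
  rw [he, he0]; exact zero_comp

lemma le_obj₃ (t : TStructure C) {T : Triangle C} (hT : T ∈ distTriang C) {n c : ℤ}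
    (h₂ : t.le n T.obj₂) (h₁ : t.le c T.obj₁) (hc : c ≤ n + 1) : t.le n T.obj₃ := by
  apply le_of_orth
  intro V hV φ
  obtain ⟨e, he⟩ := Triangle.yoneda_exact₃ _ hT φ (zero_of_le_ge t h₂ hV (by omega) _)
  have he0 : e = 0 := zero_of_le_ge t (t.le_shift c 1 (c - 1) (by omega) _ h₁) hV (by omega) e
  rw [he, he0, comp_zero]

lemma isZero_cohObj_of_ge (t : TStructure C) {x : C} {c n : ℤ} (hx : t.ge c x) (hn : n < c) :
    IsZero (cohObj t n x) := by
  obtain ⟨G, hL, hG, f, g, h, hT⟩ := truncLE_prop t n x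
  have hx' : t.ge (n + 1) x := t.ge_antitone (by omega) x hx
  have hzL : IsZero (truncLEObj t n x) := by
    have hLge : t.ge (n + 1) (truncLEObj t n x) := ge_obj₁ t hT hx' hG (by omega)
    rw [IsZero.iff_id_eq_zero]
    exact zero_of_le_ge t hL hLge (by omega) _
  obtain ⟨L', hL', hQ, u, v, w, hT'⟩ := truncGE_prop t n (truncLEObj t n x)
  have hv : v = 0 := hzL.eq_of_src v 0
  have hzQ : IsZero (truncGEObj t n (truncLEObj t n x)) := isZero₃' t hT' hL' hQ (by omega) hv
  exact isZero_shift hzQ n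

lemma isZero_cohObj_of_le (t : TStructure C) {x : C} {d n : ℤ} (hx : t.le d x) (hn : d < n) :
    IsZero (cohObj t n x) := by
  obtain ⟨G, hL, hG, f, g, h, hT⟩ := truncLE_prop t n x
  have hg : g = 0 := zero_of_le_ge t hx hG (by omega) g
  have hzG : IsZero G := isZero₃' t hT hL hG (by omega) hg
  have hf : IsIso f := (Triangle.isZero₃_iff_isIso₁ _ hT).1 hzG
  have hLd : t.le d (truncLEObj t n x) := ObjectProperty.prop_of_iso (t.le d) (asIso f).symm hx
  obtain ⟨L', hL', hQ, u, v, w, hT'⟩ := truncGE_prop t n (truncLEObj t n x)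
  have hv : v = 0 := zero_of_le_ge t hLd hQ (by omega) v
  have hzQ : IsZero (truncGEObj t n (truncLEObj t n x)) := isZero₃' t hT' hL' hQ (by omega) hv
  exact isZero_shift hzQ n

lemma ge_succ_of_isZero_coh (t : TStructure C) {x : C} {c : ℤ} (hx : t.ge c x)
    (hc : IsZero (cohObj t c x)) : t.ge (c + 1) x := by
  obtain ⟨G, hL, hG, f, g, h, hT⟩ := truncLE_prop t c x
  obtain ⟨L', hL', hQ, u, v, w, hT'⟩ := truncGE_prop t c (truncLEObj t c x)
  have hzQ : IsZero (truncGEObj t c (truncLEObj t c x)) := isZero_of_shift c hc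
  have hu : IsIso u := (Triangle.isZero₃_iff_isIso₁ _ hT').1 hzQ
  have hLle : t.le (c - 1) (truncLEObj t c x) := ObjectProperty.prop_of_iso (t.le (c - 1)) (asIso u) hL'
  have hf : f = 0 := zero_of_le_ge t hLle hx (by omega) f
  have hzL : IsZero (truncLEObj t c x) := isZero₁' t hT hLle hG (by omega) hf
  have : IsIso g := (Triangle.isZero₁_iff_isIso₂ _ hT).1 hzL
  exact ObjectProperty.prop_of_iso (t.ge (c + 1)) (asIso g).symm hG

lemma le_pred_of_isZero_coh (t : TStructure C) {x : C} {d : ℤ} (hx : t.le d x)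
    (hd : IsZero (cohObj t d x)) : t.le (d - 1) x := by
  obtain ⟨G, hL, hG, f, g, h, hT⟩ := truncLE_prop t d x
  have hg : g = 0 := zero_of_le_ge t hx hG (by omega) g
  have hzG : IsZero G := isZero₃' t hT hL hG (by omega) hg
  have hf : IsIso f := (Triangle.isZero₃_iff_isIso₁ _ hT).1 hzG
  obtain ⟨L', hL', hQ, u, v, w, hT'⟩ := truncGE_prop t d (truncLEObj t d x)
  have hzQ : IsZero (truncGEObj t d (truncLEObj t d x)) := isZero_of_shift d hd
  have hu : IsIso u := (Triangle.isZero₃_iff_isIso₁ _ hT').1 hzQ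
  have hLle : t.le (d - 1) (truncLEObj t d x) := ObjectProperty.prop_of_iso (t.le (d - 1)) (asIso u) hL'
  exact ObjectProperty.prop_of_iso (t.le (d - 1)) (asIso f) hLle

lemma memIcc_iff (t : TStructure C) (ht : IsBoundedTStructure t) {a b : ℤ} {x : C} :
    MemIcc t a b x ↔ t.ge a x ∧ t.le b x := by
  constructor
  · intro h
    obtain ⟨c, d, hc, hd⟩ := ht x
    constructor
    · have key : ∀ k : ℕ, t.ge (a - k) x → t.ge a x := by
        intro k
        induction k with
        | zero => intro h'; simpa using h'
        | succ k ih =>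
          intro h'
          rw [show ((k + 1 : ℕ) : ℤ) = (k : ℤ) + 1 by push_cast; ring] at h'
          apply ih
          have h'' := ge_succ_of_isZero_coh t h' (h _ (Or.inl (by omega)))
          rw [show a - ((k : ℤ) + 1) + 1 = a - (k : ℤ) by omega] at h''
          exact h''
      exact key (a - c).toNat (t.ge_antitone (by omega) x hc)
    · have key : ∀ k : ℕ, t.le (b + k) x → t.le b x := by
        intro k
        induction k with
        | zero => intro h'; simpa using h'
        | succ k ih =>
          intro h'
          rw [show ((k + 1 : ℕ) : ℤ) = (k : ℤ) + 1 by push_cast; ring] at h'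
          apply ih
          have h'' := le_pred_of_isZero_coh t h' (h _ (Or.inr (by omega)))
          rw [show b + ((k : ℤ) + 1) - 1 = b + (k : ℤ) by omega] at h''
          exact h''
      exact key (d - b).toNat (t.le_monotone (by omega) x hd)
  · rintro ⟨h1, h2⟩ i (hi | hi)
    · exact isZero_cohObj_of_ge t h1 hi
    · exact isZero_cohObj_of_le t h2 hi

lemma hom_zero_of_le (t : TStructure C) (ht : IsBoundedTStructure t) {x : C} (n : ℤ)
    (H : ∀ (W : C) (d : ℤ), t.le d W → t.ge d W → d ≤ n → ∀ f : W ⟶ x, f = 0)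
    (W : C) (hW : t.le n W) (f : W ⟶ x) : f = 0 := by
  suffices h : ∀ (k : ℕ) (W : C), t.le n W → t.ge (n - k) W → ∀ f : W ⟶ x, f = 0 by
    obtain ⟨c, d, hc, hd⟩ := ht W
    exact h (n - c).toNat W hW (t.ge_antitone (by omega) W hc) f
  intro k
  induction k with
  | zero => intro W hW hW' f; exact H W n hW (by simpa using hW') le_rfl f
  | succ k ih =>
    intro W hW hW' f
    rw [show ((k + 1 : ℕ) : ℤ) = (k : ℤ) + 1 by push_cast; ring] at hW'
    obtain ⟨G, hL, hG, u, v, w, hT⟩ := truncLE_prop t (n - ((k : ℤ) + 1)) W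
    have hLge : t.ge (n - ((k : ℤ) + 1)) (truncLEObj t (n - ((k : ℤ) + 1)) W) :=
      ge_obj₁ t hT hW' hG (by omega)
    have huf : u ≫ f = 0 := H _ (n - ((k : ℤ) + 1)) hL hLge (by omega) (u ≫ f)
    obtain ⟨g', hg'⟩ := Triangle.yoneda_exact₂ _ hT f huf
    have hGle : t.le n G := le_obj₃ t hT hW hL (by omega)
    have hGge : t.ge (n - (k : ℤ)) G := by
      rw [show n - (k : ℤ) = n - ((k : ℤ) + 1) + 1 by omega]
      exact hG
    rw [hg', ih G hGle hGge g']; exact comp_zero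

lemma hom_zero_of_ge (t : TStructure C) (ht : IsBoundedTStructure t) {x : C} (n : ℤ)
    (H : ∀ (W : C) (d : ℤ), t.le d W → t.ge d W → n ≤ d → ∀ f : x ⟶ W, f = 0)
    (W : C) (hW : t.ge n W) (f : x ⟶ W) : f = 0 := by
  suffices h : ∀ (k : ℕ) (W : C), t.ge n W → t.le (n + k) W → ∀ f : x ⟶ W, f = 0 by
    obtain ⟨c, d, hc, hd⟩ := ht W
    exact h (d - n).toNat W hW (t.le_monotone (by omega) W hd) f
  intro k
  induction k with
  | zero => intro W h1 h2 f; exact H W n (by simpa using h2) h1 le_rfl f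
  | succ k ih =>
    intro W h1 h2 f
    rw [show ((k + 1 : ℕ) : ℤ) = (k : ℤ) + 1 by push_cast; ring] at h2
    obtain ⟨G, hL, hG, u, v, w, hT⟩ := truncLE_prop t (n + (k : ℤ)) W
    have hGle : t.le (n + (k : ℤ) + 1) G := le_obj₃ t hT (by rwa [show n + ((k:ℤ)+1) = n + (k:ℤ) + 1 by ring] at h2) hL (by omega)
    have hfv : f ≫ v = 0 := H G (n + (k : ℤ) + 1) hGle hG (by omega) (f ≫ v)
    obtain ⟨g', hg'⟩ := Triangle.coyoneda_exact₂ _ hT f hfv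
    have hLge : t.ge n (truncLEObj t (n + (k : ℤ)) W) := ge_obj₁ t hT h1 hG (by omega)
    rw [hg', ih _ hLge hL g']; exact zero_comp

lemma ge_of_heart (t : TStructure C) (ht : IsBoundedTStructure t) {x : C} (a : ℤ)
    (H : ∀ (W : C) (d : ℤ), t.le d W → t.ge d W → d < a → ∀ f : W ⟶ x, f = 0) :
    t.ge a x := by
  apply ge_of_orth
  intro W hW f
  exact hom_zero_of_le t ht (a - 1) (fun W' d h1 h2 hd f' => H W' d h1 h2 (by omega) f') W hW f

lemma le_of_heart (t : TStructure C) (ht : IsBoundedTStructure t) {x : C} (b : ℤ)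
    (H : ∀ (W : C) (d : ℤ), t.le d W → t.ge d W → b < d → ∀ f : x ⟶ W, f = 0) :
    t.le b x := by
  apply le_of_orth
  intro W hW f
  exact hom_zero_of_ge t ht (b + 1) (fun W' d h1 h2 hd f' => H W' d h1 h2 (by omega) f') W hW f

/-- For hearts `A` (of `t₁`) and `H` (of `t₂`) of bounded t-structures
and integers `a ≤ b`: `H ∈ [a,b]_A` if and only if `A ∈ [-b,-a]_H`. -/
theorem heart_memIcc_symm
    (t₁ t₂ : TStructure C) (ht₁ : IsBoundedTStructure t₁) (ht₂ : IsBoundedTStructure t₂)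
    (a b : ℤ) (hab : a ≤ b) :
    (∀ x : C, InHeart t₂ x → MemIcc t₁ a b x) ↔
    (∀ x : C, InHeart t₁ x → MemIcc t₂ (-b) (-a) x) := by
  constructor
  · intro hL x hx
    rw [memIcc_iff t₂ ht₂]
    have hS : ∀ y, InHeart t₂ y → t₁.ge a y ∧ t₁.le b y := fun y hy =>
      (memIcc_iff t₁ ht₁).1 (hL y hy)
    constructor
    · apply ge_of_heart t₂ ht₂
      intro W d h1 h2 hd f
      have hy : InHeart t₂ (W⟦d⟧) :=
        ⟨t₂.le_shift d d 0 (by omega) W h1, t₂.ge_shift d d 0 (by omega) W h2⟩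
      have h3 : t₁.le b (W⟦d⟧) := (hS _ hy).2
      have h4 : t₁.ge (-d) (x⟦d⟧) := t₁.ge_shift 0 d (-d) (by omega) x hx.2
      have h5 : (shiftFunctor C d).map f = 0 := zero_of_le_ge t₁ h3 h4 (by omega) _
      exact (shiftFunctor C d).map_injective (by rw [h5, Functor.map_zero])
    · apply le_of_heart t₂ ht₂
      intro W d h1 h2 hd f
      have hy : InHeart t₂ (W⟦d⟧) :=
        ⟨t₂.le_shift d d 0 (by omega) W h1, t₂.ge_shift d d 0 (by omega) W h2⟩
      have h3 : t₁.ge a (W⟦d⟧) := (hS _ hy).1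
      have h4 : t₁.le (-d) (x⟦d⟧) := t₁.le_shift 0 d (-d) (by omega) x hx.1
      have h5 : (shiftFunctor C d).map f = 0 := zero_of_le_ge t₁ h4 h3 (by omega) _
      exact (shiftFunctor C d).map_injective (by rw [h5, Functor.map_zero])
  · intro hR x hx
    rw [memIcc_iff t₁ ht₁]
    have hS : ∀ y, InHeart t₁ y → t₂.ge (-b) y ∧ t₂.le (-a) y := fun y hy =>
      (memIcc_iff t₂ ht₂).1 (hR y hy)
    constructor
    · apply ge_of_heart t₁ ht₁
      intro W d h1 h2 hd f
      have hy : InHeart t₁ (W⟦d⟧) :=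
        ⟨t₁.le_shift d d 0 (by omega) W h1, t₁.ge_shift d d 0 (by omega) W h2⟩
      have h3 : t₂.le (-a) (W⟦d⟧) := (hS _ hy).2
      have h4 : t₂.ge (-d) (x⟦d⟧) := t₂.ge_shift 0 d (-d) (by omega) x hx.2
      have h5 : (shiftFunctor C d).map f = 0 := zero_of_le_ge t₂ h3 h4 (by omega) _
      exact (shiftFunctor C d).map_injective (by rw [h5, Functor.map_zero])
    · apply le_of_heart t₁ ht₁
      intro W d h1 h2 hd f
      have hy : InHeart t₁ (W⟦d⟧) :=
        ⟨t₁.le_shift d d 0 (by omega) W h1, t₁.ge_shift d d 0 (by omega) W h2⟩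
      have h3 : t₂.ge (-b) (W⟦d⟧) := (hS _ hy).1
      have h4 : t₂.le (-d) (x⟦d⟧) := t₂.le_shift 0 d (-d) (by omega) x hx.1
      have h5 : (shiftFunctor C d).map f = 0 := zero_of_le_ge t₂ h4 h3 (by omega) _
      exact (shiftFunctor C d).map_injective (by rw [h5, Functor.map_zero])

end TSt
end
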